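/- Shearer's inequality: if 𝒜 is a multiset of subsets of [n] = {1,…,n} such that every i ∈ [n] belongs to at least k members of 𝒜 (counted with multiplicity), then k·H(X₁,…,Xₙ) ≤ ∑_{A∈𝒜} H(X_A) for any discrete random variables X₁,…,Xₙ with finite joint entropy. -/

import Mathlib

open Finset

/-- Probability that the discrete random variable `X` takes the value `v`,
where `p` is the probability mass function on the finite sample space `Ω`. -/
noncomputable def probOf {Ω S : Type*} [Fintype Ω] [DecidableEq S]
    (p : Ω → ℝ) (X : Ω → S) (v : S) : ℝ :=
  ∑ ω ∈ univ.filter (fun ω => X ω = v), p ω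

/-- Shannon entropy (base 2) of a discrete random variable. -/
noncomputable def H {Ω S : Type*} [Fintype Ω] [DecidableEq S]
    (p : Ω → ℝ) (X : Ω → S) : ℝ :=
  -∑ v ∈ univ.image X, probOf p X v * Real.logb 2 (probOf p X v)

/-- Conditional Shannon entropy `H(X | Y)`. -/
noncomputable def condH {Ω S T : Type*} [Fintype Ω] [DecidableEq S] [DecidableEq T]
    (p : Ω → ℝ) (X : Ω → S) (Y : Ω → T) : ℝ :=
  -∑ v ∈ univ.image (fun ω => (X ω, Y ω)),
      probOf p (fun ω => (X ω, Y ω)) v *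
        Real.logb 2 (probOf p (fun ω => (X ω, Y ω)) v / probOf p Y v.2)

/-- Joint entropy of the subfamily `(X i)_{i ∈ A}`. -/
noncomputable def jointH {Ω S : Type*} [Fintype Ω] [DecidableEq S] {n : ℕ}
    (p : Ω → ℝ) (X : Fin n → Ω → S) (A : Finset (Fin n)) : ℝ :=
  H p (fun ω (i : {i // i ∈ A}) => X i.1 ω)

/-- Conditional joint entropy `H(X_A | X_B)`. -/
noncomputable def condJointH {Ω S : Type*} [Fintype Ω] [DecidableEq S] {n : ℕ}
    (p : Ω → ℝ) (X : Fin n → Ω → S) (A B : Finset (Fin n)) : ℝ :=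
  condH p (fun ω (i : {i // i ∈ A}) => X i.1 ω) (fun ω (i : {i // i ∈ B}) => X i.1 ω)

section Shearer
variable {Ω S T U : Type*} [Fintype Ω] [DecidableEq S] [DecidableEq T] [DecidableEq U]
variable (p : Ω → ℝ)

lemma probOf_nonneg (hp : ∀ ω, 0 ≤ p ω) (X : Ω → S) (v : S) : 0 ≤ probOf p X v :=
  Finset.sum_nonneg fun ω _ => hp ω

lemma p_le_probOf (hp : ∀ ω, 0 ≤ p ω) (X : Ω → S) (ω : Ω) : p ω ≤ probOf p X (X ω) := by
  apply Finset.single_le_sum (fun i _ => hp i)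
  simp

lemma sum_F_mul_probOf (X : Ω → S) (F : S → ℝ) :
    ∑ v ∈ univ.image X, F v * probOf p X v = ∑ ω, F (X ω) * p ω := by
  rw [← Finset.sum_fiberwise_of_maps_to (g := X) (fun ω _ => Finset.mem_image_of_mem X (mem_univ ω))
    (fun ω => F (X ω) * p ω)]
  refine Finset.sum_congr rfl fun v hv => ?_
  rw [probOf, Finset.mul_sum]
  exact Finset.sum_congr rfl fun ω hω => by
    simp only [mem_filter] at hω; rw [hω.2]

lemma H_eq (X : Ω → S) :
    H p X = -∑ ω, Real.logb 2 (probOf p X (X ω)) * p ω := by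
  rw [H, ← sum_F_mul_probOf p X (fun v => Real.logb 2 (probOf p X v))]
  congr 1
  exact Finset.sum_congr rfl fun v _ => mul_comm _ _

lemma condH_eq (X : Ω → S) (Y : Ω → T) :
    condH p X Y = -∑ ω,
      Real.logb 2 (probOf p (fun ω => (X ω, Y ω)) (X ω, Y ω) / probOf p Y (Y ω)) * p ω := by
  rw [condH, ← sum_F_mul_probOf p (fun ω => (X ω, Y ω))
    (fun v => Real.logb 2 (probOf p (fun ω => (X ω, Y ω)) v / probOf p Y v.2))]
  congr 1
  exact Finset.sum_congr rfl fun v _ => mul_comm _ _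

lemma probOf_comp_inj {S' : Type*} [DecidableEq S'] (X : Ω → S) {e : S → S'}
    (he : Function.Injective e) (v : S) :
    probOf p (fun ω => e (X ω)) (e v) = probOf p X v := by
  unfold probOf
  congr 1
  ext ω
  simp [he.eq_iff]

lemma H_comp_inj {S' : Type*} [DecidableEq S'] (X : Ω → S) {e : S → S'}
    (he : Function.Injective e) :
    H p (fun ω => e (X ω)) = H p X := by
  rw [H_eq, H_eq]
  congr 1
  exact Finset.sum_congr rfl fun ω _ => by rw [probOf_comp_inj p X he]

lemma condH_comp_inj {S' T' : Type*} [DecidableEq S'] [DecidableEq T']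
    (X : Ω → S) (Y : Ω → T) {e : S → S'} {f : T → T'}
    (he : Function.Injective e) (hf : Function.Injective f) :
    condH p (fun ω => e (X ω)) (fun ω => f (Y ω)) = condH p X Y := by
  rw [condH_eq, condH_eq]
  congr 1
  refine Finset.sum_congr rfl fun ω _ => ?_
  have h1 : probOf p (fun ω => (e (X ω), f (Y ω))) (e (X ω), f (Y ω))
      = probOf p (fun ω => (X ω, Y ω)) (X ω, Y ω) :=
    probOf_comp_inj p (fun ω => (X ω, Y ω))
      (e := fun u => (e u.1, f u.2)) (fun a b hab => by
        simp only [Prod.mk.injEq] at hab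
        exact Prod.ext (he hab.1) (hf hab.2)) (X ω, Y ω)
  have h2 : probOf p (fun ω => f (Y ω)) (f (Y ω)) = probOf p Y (Y ω) :=
    probOf_comp_inj p Y hf (Y ω)
  rw [h1, h2]

lemma probOf_pair_le (hp : ∀ ω, 0 ≤ p ω) (X : Ω → S) (Y : Ω → T) (v : S × T) :
    probOf p (fun ω => (X ω, Y ω)) v ≤ probOf p Y v.2 := by
  apply Finset.sum_le_sum_of_subset_of_nonneg
  · intro ω hω
    simp only [mem_filter, mem_univ, true_and, Prod.mk.injEq] at hω ⊢
    rw [← hω]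
  · exact fun ω _ _ => hp ω

end Shearer

section Shearer2
variable {Ω S T U : Type*} [Fintype Ω] [DecidableEq S] [DecidableEq T] [DecidableEq U]
variable (p : Ω → ℝ)

lemma chainRule (hp : ∀ ω, 0 ≤ p ω) (X : Ω → S) (Y : Ω → T) :
    H p (fun ω => (X ω, Y ω)) = H p Y + condH p X Y := by
  rw [H_eq, H_eq, condH_eq, ← neg_add, ← Finset.sum_add_distrib]
  congr 1
  refine Finset.sum_congr rfl fun ω _ => ?_
  rcases eq_or_lt_of_le (hp ω) with h0 | h0
  · rw [← h0]; ring
  · have hP : 0 < probOf p (fun ω => (X ω, Y ω)) (X ω, Y ω) :=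
      lt_of_lt_of_le h0 (p_le_probOf p hp _ ω)
    have hq : 0 < probOf p Y (Y ω) := lt_of_lt_of_le hP (probOf_pair_le p hp X Y _)
    rw [Real.logb_div (ne_of_gt hP) (ne_of_gt hq)]
    ring

lemma condH_nonneg (hp : ∀ ω, 0 ≤ p ω) (X : Ω → S) (Y : Ω → T) :
    0 ≤ condH p X Y := by
  rw [condH_eq, ← Finset.sum_neg_distrib]
  refine Finset.sum_nonneg fun ω _ => ?_
  rw [← neg_mul]
  rcases eq_or_lt_of_le (hp ω) with h0 | h0
  · rw [← h0]; simp
  · have hP : 0 < probOf p (fun ω => (X ω, Y ω)) (X ω, Y ω) :=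
      lt_of_lt_of_le h0 (p_le_probOf p hp _ ω)
    have hq : 0 < probOf p Y (Y ω) := lt_of_lt_of_le hP (probOf_pair_le p hp X Y _)
    rw [mul_comm]
    apply mul_nonneg (le_of_lt h0)
    rw [neg_nonneg]
    apply Real.logb_nonpos one_lt_two (le_of_lt (div_pos hP hq))
    rw [div_le_one hq]
    exact probOf_pair_le p hp X Y _

end Shearer2
section Shearer3
variable {Ω S T U : Type*} [Fintype Ω] [DecidableEq S] [DecidableEq T] [DecidableEq U]
variable (p : Ω → ℝ)

lemma probOf_map_le {V V' : Type*} [DecidableEq V] [DecidableEq V']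
    (hp : ∀ ω, 0 ≤ p ω) (W : Ω → V) (G : V → V') (w : V) :
    probOf p W w ≤ probOf p (fun ω => G (W ω)) (G w) := by
  apply Finset.sum_le_sum_of_subset_of_nonneg
  · intro ω hω
    simp only [mem_filter, mem_univ, true_and] at hω ⊢
    rw [hω]
  · exact fun ω _ _ => hp ω

lemma sum_probOf_one (hsum : ∑ ω, p ω = 1) (X : Ω → S) :
    ∑ v ∈ univ.image X, probOf p X v = 1 := by
  have := sum_F_mul_probOf p X (fun _ => (1 : ℝ))
  simpa using this.trans (by simpa using hsum)

lemma probOf_marginal (Y : Ω → T) (Z : Ω → U) (y : T) :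
    probOf p Y y = ∑ u ∈ (univ.image (fun ω => (Y ω, Z ω))).filter (fun u => u.1 = y),
      probOf p (fun ω => (Y ω, Z ω)) u := by
  have hmaps : ∀ ω ∈ univ.filter (fun ω => Y ω = y),
      (Y ω, Z ω) ∈ (univ.image (fun ω => (Y ω, Z ω))).filter (fun u => u.1 = y) := by
    intro ω hω
    simp only [mem_filter, mem_univ, true_and] at hω ⊢
    exact ⟨Finset.mem_image_of_mem _ (mem_univ ω), hω⟩
  rw [probOf, ← Finset.sum_fiberwise_of_maps_to hmaps p]
  refine Finset.sum_congr rfl fun u hu => ?_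
  simp only [mem_filter, mem_univ, true_and] at hu
  rw [probOf]
  congr 1
  ext ω
  simp only [mem_filter, mem_univ, true_and, filter_filter]
  constructor
  · rintro ⟨_, h⟩; exact h
  · intro h
    refine ⟨?_, h⟩
    have : (Y ω, Z ω).1 = u.1 := congrArg Prod.fst h
    simp only at this
    rw [this, hu.2]

lemma concaveOn_logb : ConcaveOn ℝ (Set.Ioi 0) (Real.logb 2) := by
  have h := strictConcaveOn_log_Ioi.concaveOn.smul
    (le_of_lt (inv_pos.mpr (Real.log_pos one_lt_two)))
  convert h using 1
  case e'_4 => rfl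
  case e'_9 => rfl
  case e'_10 => rfl
  funext x
  simp [Real.logb, div_eq_inv_mul, Pi.smul_apply, smul_eq_mul]

end Shearer3
section Shearer4
variable {Ω S T U : Type*} [Fintype Ω] [DecidableEq S] [DecidableEq T] [DecidableEq U]
variable (p : Ω → ℝ)

lemma sum_FP_le_one (hp : ∀ ω, 0 ≤ p ω) (hsum : ∑ ω, p ω = 1)
    (X : Ω → S) (Y : Ω → T) (Z : Ω → U) :
    ∑ w ∈ univ.image (fun ω => (X ω, (Y ω, Z ω))),
      ((probOf p (fun ω => (X ω, Y ω)) (w.1, w.2.1) / probOf p Y w.2.1) /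
        (probOf p (fun ω => (X ω, (Y ω, Z ω))) w / probOf p (fun ω => (Y ω, Z ω)) w.2)) *
          probOf p (fun ω => (X ω, (Y ω, Z ω))) w ≤ 1 := by
  set W : Ω → S × T × U := fun ω => (X ω, (Y ω, Z ω)) with hW
  set XY : Ω → S × T := fun ω => (X ω, Y ω) with hXY
  set YZ : Ω → T × U := fun ω => (Y ω, Z ω) with hYZ
  set s' := (univ.image W).filter (fun w => 0 < probOf p W w) with hs'
  have hstep1 : ∑ w ∈ univ.image W,
      ((probOf p XY (w.1, w.2.1) / probOf p Y w.2.1) /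
        (probOf p W w / probOf p YZ w.2)) * probOf p W w
      = ∑ w ∈ s', probOf p XY (w.1, w.2.1) * probOf p YZ w.2 / probOf p Y w.2.1 := by
    have e1 : ∑ w ∈ s', ((probOf p XY (w.1, w.2.1) / probOf p Y w.2.1) /
          (probOf p W w / probOf p YZ w.2)) * probOf p W w
        = ∑ w ∈ univ.image W, ((probOf p XY (w.1, w.2.1) / probOf p Y w.2.1) /
          (probOf p W w / probOf p YZ w.2)) * probOf p W w :=
      Finset.sum_filter_of_ne (fun w _ hne => ?_)
    rw [← e1]
    · refine Finset.sum_congr rfl fun w hw => ?_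
      have hw' := Finset.mem_filter.mp hw
      have hPw : 0 < probOf p W w := hw'.2
      have hYZw : 0 < probOf p YZ w.2 := by
        refine lt_of_lt_of_le hPw ?_
        have := probOf_map_le p hp W Prod.snd w
        exact this
      have hYw : 0 < probOf p Y w.2.1 := by
        refine lt_of_lt_of_le hYZw ?_
        have := probOf_map_le p hp YZ Prod.fst w.2
        exact this
      field_simp
    · by_contra hlt
      have h0 : probOf p W w = 0 :=
        le_antisymm (not_lt.mp hlt) (probOf_nonneg p hp W w)
      exact hne (by rw [h0, mul_zero])

  rw [hstep1]
  have hmaps : ∀ w ∈ s', (w.1, w.2.1) ∈ univ.image XY := by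
    intro w hw
    have hw' := Finset.mem_filter.mp hw
    obtain ⟨ω, _, hω⟩ := Finset.mem_image.mp hw'.1
    exact Finset.mem_image.mpr ⟨ω, mem_univ ω, by rw [← hω]⟩
  rw [← Finset.sum_fiberwise_of_maps_to hmaps
    (fun w => probOf p XY (w.1, w.2.1) * probOf p YZ w.2 / probOf p Y w.2.1)]
  have hbound : ∀ a ∈ univ.image XY,
      ∑ w ∈ s'.filter (fun w => (w.1, w.2.1) = a),
        probOf p XY (w.1, w.2.1) * probOf p YZ w.2 / probOf p Y w.2.1
      ≤ probOf p XY a := by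
    intro a _
    have hrw : ∑ w ∈ s'.filter (fun w => (w.1, w.2.1) = a),
        probOf p XY (w.1, w.2.1) * probOf p YZ w.2 / probOf p Y w.2.1
        = (probOf p XY a / probOf p Y a.2) *
          ∑ w ∈ s'.filter (fun w => (w.1, w.2.1) = a), probOf p YZ w.2 := by
      rw [Finset.mul_sum]
      refine Finset.sum_congr rfl fun w hw => ?_
      simp only [mem_filter] at hw
      have h1 : w.1 = a.1 := congrArg Prod.fst hw.2
      have h2 : w.2.1 = a.2 := congrArg Prod.snd hw.2
      rw [hw.2, h2]
      ring
    rw [hrw]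
    have hsub : ∑ w ∈ s'.filter (fun w => (w.1, w.2.1) = a), probOf p YZ w.2
        ≤ probOf p Y a.2 := by
      have hinj : ∀ w ∈ s'.filter (fun w => (w.1, w.2.1) = a),
          ∀ w' ∈ s'.filter (fun w => (w.1, w.2.1) = a), w.2 = w'.2 → w = w' := by
        intro w hw w' hw' h
        have hw1 := (Finset.mem_filter.mp hw).2
        have hw'1 := (Finset.mem_filter.mp hw').2
        have : w.1 = w'.1 := by
          rw [show w.1 = a.1 from congrArg Prod.fst hw1,
            show w'.1 = a.1 from congrArg Prod.fst hw'1]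
        exact Prod.ext this h
      have himg : ∑ u ∈ (s'.filter (fun w => (w.1, w.2.1) = a)).image Prod.snd,
          probOf p YZ u = ∑ w ∈ s'.filter (fun w => (w.1, w.2.1) = a), probOf p YZ w.2 :=
        Finset.sum_image hinj
      rw [← himg, probOf_marginal p Y Z a.2]
      apply Finset.sum_le_sum_of_subset_of_nonneg
      · intro u hu
        obtain ⟨w, hw, hwu⟩ := Finset.mem_image.mp hu
        have hwf := Finset.mem_filter.mp hw
        have hws := Finset.mem_filter.mp hwf.1
        refine Finset.mem_filter.mpr ⟨?_, ?_⟩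
        · obtain ⟨ω, _, hω⟩ := Finset.mem_image.mp hws.1
          exact Finset.mem_image.mpr ⟨ω, mem_univ ω, by rw [← hwu, ← hω]⟩
        · rw [← hwu]
          exact congrArg Prod.snd hwf.2
      · exact fun u _ _ => probOf_nonneg p hp YZ u
    have hnn : (0:ℝ) ≤ ∑ w ∈ s'.filter (fun w => (w.1, w.2.1) = a), probOf p YZ w.2 :=
      Finset.sum_nonneg fun w _ => probOf_nonneg p hp YZ w.2
    rcases eq_or_lt_of_le (probOf_nonneg p hp Y a.2) with hY0 | hY0
    · have : ∑ w ∈ s'.filter (fun w => (w.1, w.2.1) = a), probOf p YZ w.2 = 0 :=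
        le_antisymm (by rw [← hY0] at hsub; exact hsub) hnn
      rw [this, mul_zero]
      exact probOf_nonneg p hp XY a
    · calc (probOf p XY a / probOf p Y a.2) *
            ∑ w ∈ s'.filter (fun w => (w.1, w.2.1) = a), probOf p YZ w.2
          ≤ (probOf p XY a / probOf p Y a.2) * probOf p Y a.2 := by
            apply mul_le_mul_of_nonneg_left hsub
            exact div_nonneg (probOf_nonneg p hp XY a) (le_of_lt hY0)
        _ = probOf p XY a := div_mul_cancel₀ _ (ne_of_gt hY0)
  calc ∑ a ∈ univ.image XY, ∑ w ∈ s'.filter (fun w => (w.1, w.2.1) = a),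
        probOf p XY (w.1, w.2.1) * probOf p YZ w.2 / probOf p Y w.2.1
      ≤ ∑ a ∈ univ.image XY, probOf p XY a := Finset.sum_le_sum hbound
    _ = 1 := sum_probOf_one p hsum XY

end Shearer4
section Shearer5
variable {Ω S T U : Type*} [Fintype Ω] [DecidableEq S] [DecidableEq T] [DecidableEq U]
variable (p : Ω → ℝ)

lemma condH_pair_le (hp : ∀ ω, 0 ≤ p ω) (hsum : ∑ ω, p ω = 1)
    (X : Ω → S) (Y : Ω → T) (Z : Ω → U) :
    condH p X (fun ω => (Y ω, Z ω)) ≤ condH p X Y := by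
  set W : Ω → S × T × U := fun ω => (X ω, (Y ω, Z ω)) with hW
  set XY : Ω → S × T := fun ω => (X ω, Y ω) with hXY
  set YZ : Ω → T × U := fun ω => (Y ω, Z ω) with hYZ
  set F : S × T × U → ℝ := fun w =>
    (probOf p XY (w.1, w.2.1) / probOf p Y w.2.1) /
      (probOf p W w / probOf p YZ w.2) with hF
  set t := univ.filter (fun ω => 0 < p ω) with ht
  have htsum : ∑ ω ∈ t, p ω = 1 := by
    rw [ht, Finset.sum_filter_of_ne (fun ω _ hne => lt_of_le_of_ne (hp ω) (Ne.symm hne)), hsum]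
  -- positivity facts on the support
  have hPW : ∀ ω ∈ t, 0 < probOf p W (W ω) := fun ω hω =>
    lt_of_lt_of_le (Finset.mem_filter.mp hω).2 (p_le_probOf p hp W ω)
  have hPYZ : ∀ ω ∈ t, 0 < probOf p YZ (YZ ω) := fun ω hω =>
    lt_of_lt_of_le (hPW ω hω) (probOf_map_le p hp W Prod.snd (W ω))
  have hPY : ∀ ω ∈ t, 0 < probOf p Y (Y ω) := fun ω hω =>
    lt_of_lt_of_le (hPYZ ω hω) (probOf_map_le p hp YZ Prod.fst (YZ ω))
  have hPXY : ∀ ω ∈ t, 0 < probOf p XY (XY ω) := fun ω hω =>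
    lt_of_lt_of_le (hPW ω hω) (probOf_map_le p hp W (fun w => (w.1, w.2.1)) (W ω))
  have hFpos : ∀ ω ∈ t, 0 < F (W ω) := fun ω hω =>
    div_pos (div_pos (hPXY ω hω) (hPY ω hω)) (div_pos (hPW ω hω) (hPYZ ω hω))
  -- Jensen
  have hJ : ∑ ω ∈ t, p ω * Real.logb 2 (F (W ω))
      ≤ Real.logb 2 (∑ ω ∈ t, p ω * F (W ω)) := by
    have := concaveOn_logb.le_map_sum (t := t) (w := p) (p := fun ω => F (W ω))
      (fun ω hω => hp ω) htsum (fun ω hω => hFpos ω hω)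
    simpa [smul_eq_mul] using this
  -- the expected ratio is at most 1
  have hE1 : ∑ ω ∈ t, p ω * F (W ω) ≤ 1 := by
    have e0 : ∑ ω ∈ t, p ω * F (W ω) = ∑ ω, p ω * F (W ω) := by
      rw [ht]
      exact Finset.sum_filter_of_ne (fun ω _ hne => by
        by_contra hlt
        have h0 : p ω = 0 := le_antisymm (not_lt.mp hlt) (hp ω)
        exact hne (by rw [h0, zero_mul]))
    have e1 : ∑ ω, p ω * F (W ω) = ∑ w ∈ univ.image W, F w * probOf p W w := by
      rw [sum_F_mul_probOf p W F]
      exact Finset.sum_congr rfl fun ω _ => mul_comm _ _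
    rw [e0, e1]
    exact sum_FP_le_one p hp hsum X Y Z
  have hlogE : Real.logb 2 (∑ ω ∈ t, p ω * F (W ω)) ≤ 0 := by
    apply Real.logb_nonpos one_lt_two _ hE1
    exact Finset.sum_nonneg fun ω hω => mul_nonneg (hp ω) (le_of_lt (hFpos ω hω))
  -- rewrite the two conditional entropies in ω-form and compare
  rw [condH_eq, condH_eq]
  rw [neg_le_neg_iff]
  -- goal: ∑ ω, logb (P2/qY) * pω ≤ ∑ ω, logb (P3/qYZ) * pω
  have r1 : ∑ ω, Real.logb 2 (probOf p (fun ω => (X ω, Y ω)) (X ω, Y ω)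
        / probOf p Y (Y ω)) * p ω
      = ∑ ω ∈ t, Real.logb 2 (probOf p XY (XY ω) / probOf p Y (Y ω)) * p ω := by
    rw [ht]
    exact (Finset.sum_filter_of_ne (fun ω _ hne => by
      by_contra hlt
      have h0 : p ω = 0 := le_antisymm (not_lt.mp hlt) (hp ω)
      exact hne (by rw [h0, mul_zero]))).symm
  have r2 : ∑ ω, Real.logb 2 (probOf p (fun ω => (X ω, (Y ω, Z ω))) (X ω, (Y ω, Z ω))
        / probOf p (fun ω => (Y ω, Z ω)) (Y ω, Z ω)) * p ω
      = ∑ ω ∈ t, Real.logb 2 (probOf p W (W ω) / probOf p YZ (YZ ω)) * p ω := by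
    rw [ht]
    exact (Finset.sum_filter_of_ne (fun ω _ hne => by
      by_contra hlt
      have h0 : p ω = 0 := le_antisymm (not_lt.mp hlt) (hp ω)
      exact hne (by rw [h0, mul_zero]))).symm
  rw [r1, r2, ← sub_nonpos, ← Finset.sum_sub_distrib]
  have hterm : ∀ ω ∈ t,
      Real.logb 2 (probOf p XY (XY ω) / probOf p Y (Y ω)) * p ω
        - Real.logb 2 (probOf p W (W ω) / probOf p YZ (YZ ω)) * p ω
      = p ω * Real.logb 2 (F (W ω)) := by
    intro ω hω
    have h1 : probOf p XY (XY ω) / probOf p Y (Y ω) ≠ 0 :=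
      ne_of_gt (div_pos (hPXY ω hω) (hPY ω hω))
    have h2 : probOf p W (W ω) / probOf p YZ (YZ ω) ≠ 0 :=
      ne_of_gt (div_pos (hPW ω hω) (hPYZ ω hω))
    have hFW : F (W ω) = (probOf p XY (XY ω) / probOf p Y (Y ω))
        / (probOf p W (W ω) / probOf p YZ (YZ ω)) := rfl
    rw [hFW, Real.logb_div h1 h2]
    ring
  rw [Finset.sum_congr rfl hterm]
  exact le_trans hJ hlogE

end Shearer5
section Shearer6
variable {Ω S : Type*} [Fintype Ω] [DecidableEq S] {n : ℕ}
variable (p : Ω → ℝ)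

lemma H_const (hsum : ∑ ω, p ω = 1) (X : Ω → S) (hX : ∀ ω ω', X ω = X ω') :
    H p X = 0 := by
  rcases isEmpty_or_nonempty Ω with hE | hNE
  · rw [Finset.univ_eq_empty, Finset.sum_empty] at hsum
    exact absurd hsum (by norm_num)
  obtain ⟨ω₀⟩ := hNE
  have himg : univ.image X = {X ω₀} := by
    ext v
    simp only [Finset.mem_image, mem_univ, true_and, Finset.mem_singleton]
    constructor
    · rintro ⟨ω, hω⟩; rw [← hω, hX ω ω₀]
    · intro h; exact ⟨ω₀, h.symm⟩
  have hprob : probOf p X (X ω₀) = 1 := by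
    rw [probOf, show univ.filter (fun ω => X ω = X ω₀) = univ from by
      ext ω; simp [hX ω ω₀], hsum]
  rw [H, himg, Finset.sum_singleton, hprob]
  simp

lemma jointH_empty (hsum : ∑ ω, p ω = 1) (X : Fin n → Ω → S) : jointH p X ∅ = 0 :=
  H_const p hsum _ (fun ω ω' => funext fun i => absurd i.2 (Finset.notMem_empty i.1))

lemma jointH_insert (hp : ∀ ω, 0 ≤ p ω) {i : Fin n} {B : Finset (Fin n)} (hi : i ∉ B)
    (X : Fin n → Ω → S) :
    jointH p X (insert i B) = jointH p X B + condJointH p X {i} B := by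
  have he : Function.Injective (fun (f : {j // j ∈ insert i B} → S) =>
      ((fun j : {j // j ∈ ({i} : Finset (Fin n))} =>
          f ⟨j.1, by rw [Finset.mem_singleton.mp j.2]; exact Finset.mem_insert_self i B⟩,
        fun j : {j // j ∈ B} => f ⟨j.1, Finset.mem_insert_of_mem j.2⟩) :
        ({j // j ∈ ({i} : Finset (Fin n))} → S) × ({j // j ∈ B} → S))) := by
    intro f g h
    have h1 := congrArg Prod.fst h
    have h2 := congrArg Prod.snd h
    funext j
    rcases Finset.mem_insert.mp j.2 with hj | hj
    · have hj' : j = ⟨i, Finset.mem_insert_self i B⟩ := Subtype.ext hj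
      rw [hj']
      exact congrFun h1 ⟨i, Finset.mem_singleton_self i⟩
    · exact congrFun h2 ⟨j.1, hj⟩
  have hcomp := H_comp_inj p (fun ω (j : {j // j ∈ insert i B}) => X j.1 ω) he
  have hchain := chainRule p hp
    (fun ω (j : {j // j ∈ ({i} : Finset (Fin n))}) => X j.1 ω)
    (fun ω (j : {j // j ∈ B}) => X j.1 ω)
  exact hcomp.symm.trans hchain

lemma condJointH_mono (hp : ∀ ω, 0 ≤ p ω) (hsum : ∑ ω, p ω = 1) (X : Fin n → Ω → S)
    (A : Finset (Fin n)) {B' B : Finset (Fin n)} (hBB : B' ⊆ B) :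
    condJointH p X A B ≤ condJointH p X A B' := by
  have hf : Function.Injective (fun (f : {j // j ∈ B} → S) =>
      ((fun j : {j // j ∈ B'} => f ⟨j.1, hBB j.2⟩,
        fun j : {j // j ∈ B \ B'} => f ⟨j.1, (Finset.mem_sdiff.mp j.2).1⟩) :
        ({j // j ∈ B'} → S) × ({j // j ∈ B \ B'} → S))) := by
    intro f g h
    funext j
    by_cases hj : j.1 ∈ B'
    · exact congrFun (congrArg Prod.fst h) ⟨j.1, hj⟩
    · exact congrFun (congrArg Prod.snd h) ⟨j.1, Finset.mem_sdiff.mpr ⟨j.2, hj⟩⟩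
  have hcomp := condH_comp_inj p (fun ω (j : {j // j ∈ A}) => X j.1 ω)
      (fun ω (j : {j // j ∈ B}) => X j.1 ω) (e := id) Function.injective_id hf
  have hle := condH_pair_le p hp hsum (fun ω (j : {j // j ∈ A}) => X j.1 ω)
      (fun ω (j : {j // j ∈ B'}) => X j.1 ω)
      (fun ω (j : {j // j ∈ B \ B'}) => X j.1 ω)
  exact hcomp.symm.trans_le hle

lemma jointH_chain (hp : ∀ ω, 0 ≤ p ω) (hsum : ∑ ω, p ω = 1) (X : Fin n → Ω → S)
    (A : Finset (Fin n)) :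
    jointH p X A = ∑ i ∈ A, condJointH p X {i} (A.filter (· < i)) := by
  induction A using Finset.induction_on_max with
  | empty => rw [jointH_empty p hsum X]; simp
  | insert a s hlt ih =>
    have ha : a ∉ s := fun h => lt_irrefl a (hlt a h)
    rw [jointH_insert p hp ha X, Finset.sum_insert ha, ih]
    have h1 : (insert a s).filter (· < a) = s := by
      ext x
      simp only [mem_filter, mem_insert]
      constructor
      · rintro ⟨hx | hx, hxa⟩
        · exact absurd hxa (by rw [hx]; exact lt_irrefl a)
        · exact hx
      · exact fun hx => ⟨Or.inr hx, hlt x hx⟩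
    have h2 : ∀ i ∈ s, (insert a s).filter (· < i) = s.filter (· < i) := by
      intro i hi
      ext x
      simp only [mem_filter, mem_insert]
      constructor
      · rintro ⟨hx | hx, hxi⟩
        · exfalso; rw [hx] at hxi; exact lt_asymm (hlt i hi) hxi
        · exact ⟨hx, hxi⟩
      · rintro ⟨hx, hxi⟩; exact ⟨Or.inr hx, hxi⟩
    have h3 : ∑ i ∈ s, condJointH p X {i} ((insert a s).filter (· < i))
        = ∑ i ∈ s, condJointH p X {i} (s.filter (· < i)) :=
      Finset.sum_congr rfl (fun i hi => by rw [h2 i hi])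
    rw [h1, h3]
    ring

end Shearer6

/-- Shearer's inequality: if every `i ∈ [n]` lies in at least `k` members of the
multiset `𝒜` (counted with multiplicity), then `k·H(X) ≤ ∑_{A ∈ 𝒜} H(X_A)`. -/
theorem shearer {Ω S : Type*} [Fintype Ω] [DecidableEq S] {n : ℕ}
    (p : Ω → ℝ) (hp : ∀ ω, 0 ≤ p ω) (hsum : ∑ ω, p ω = 1)
    (X : Fin n → Ω → S) (k : ℕ) (𝒜 : Multiset (Finset (Fin n)))
    (hcov : ∀ i : Fin n, k ≤ Multiset.card (𝒜.filter (fun A => i ∈ A))) :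
    (k : ℝ) * jointH p X univ ≤ (𝒜.map (fun A => jointH p X A)).sum := by
  classical
  set c : Fin n → ℝ := fun i => condJointH p X {i} (univ.filter (· < i)) with hc
  have hc0 : ∀ i, 0 ≤ c i := fun i => condH_nonneg p hp _ _
  have hA : ∀ A : Finset (Fin n), ∑ i ∈ A, c i ≤ jointH p X A := by
    intro A
    rw [jointH_chain p hp hsum X A]
    refine Finset.sum_le_sum fun i _ => ?_
    exact condJointH_mono p hp hsum X {i}
      (Finset.filter_subset_filter _ (Finset.subset_univ A))
  have huniv : jointH p X univ = ∑ i, c i := by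
    rw [jointH_chain p hp hsum X univ]
  have hcount : ∀ (ℬ : Multiset (Finset (Fin n))),
      (ℬ.map (fun A => ∑ i ∈ A, c i)).sum
        = ∑ i, (Multiset.card (ℬ.filter (fun A => i ∈ A)) : ℝ) * c i := by
    intro ℬ
    induction ℬ using Multiset.induction_on with
    | empty => simp
    | cons A ℬ ih =>
      rw [Multiset.map_cons, Multiset.sum_cons, ih]
      have hcard : ∀ i : Fin n, (Multiset.card ((A ::ₘ ℬ).filter (fun B => i ∈ B)) : ℝ)
          = (if i ∈ A then (1:ℝ) else 0) + (Multiset.card (ℬ.filter (fun B => i ∈ B)) : ℝ) := by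
        intro i
        by_cases hi : i ∈ A
        · rw [Multiset.filter_cons_of_pos (p := fun B => i ∈ B) ℬ hi,
            Multiset.card_cons, if_pos hi]
          push_cast
          ring
        · rw [Multiset.filter_cons_of_neg (p := fun B => i ∈ B) ℬ hi, if_neg hi, zero_add]
      have e1 : ∑ i, (Multiset.card ((A ::ₘ ℬ).filter (fun B => i ∈ B)) : ℝ) * c i
          = ∑ i, ((if i ∈ A then (1:ℝ) else 0) * c i
              + (Multiset.card (ℬ.filter (fun B => i ∈ B)) : ℝ) * c i) :=
        Finset.sum_congr rfl fun i _ => by rw [hcard i, add_mul]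
      have e2 : ∑ i, (if i ∈ A then (1:ℝ) else 0) * c i = ∑ i ∈ A, c i := by
        simp only [ite_mul, one_mul, zero_mul]
        rw [Finset.sum_ite_mem, Finset.univ_inter]
      rw [e1, Finset.sum_add_distrib, e2]
  have h1 : (k:ℝ) * jointH p X univ ≤ (𝒜.map (fun A => ∑ i ∈ A, c i)).sum := by
    rw [huniv, hcount 𝒜, Finset.mul_sum]
    refine Finset.sum_le_sum fun i _ => ?_
    apply mul_le_mul_of_nonneg_right _ (hc0 i)
    exact_mod_cast hcov i
  refine le_trans h1 ?_
  have h2 : ∀ (ℬ : Multiset (Finset (Fin n))),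
      (ℬ.map (fun A => ∑ i ∈ A, c i)).sum ≤ (ℬ.map (fun A => jointH p X A)).sum := by
    intro ℬ
    induction ℬ using Multiset.induction_on with
    | empty => simp
    | cons A ℬ ih =>
      rw [Multiset.map_cons, Multiset.sum_cons, Multiset.map_cons, Multiset.sum_cons]
      exact add_le_add (hA A) ih
  exact h2 𝒜
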